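/- For real numbers r_1, ..., r_n each in [0,1] with n ≥ 1, the difference between their arithmetic mean and their product satisfies 0 ≤ (r_1 + ... + r_n)/n − (r_1 · r_2 ··· r_n) ≤ (n−1)/n. -/

import Mathlib

lemma sum_le_card_sub_one_add_prod (s : Finset ℕ) (f : ℕ → ℝ)
    (hf : ∀ i ∈ s, 0 ≤ f i ∧ f i ≤ 1) :
    ∑ i ∈ s, f i ≤ (s.card : ℝ) - 1 + ∏ i ∈ s, f i := by
  induction s using Finset.induction_on with
  | empty => simp
  | @insert a s ha ih =>
    have hfs : ∀ i ∈ s, 0 ≤ f i ∧ f i ≤ 1 := fun i hi => hf i (Finset.mem_insert_of_mem hi)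
    have hP0 : 0 ≤ ∏ i ∈ s, f i := Finset.prod_nonneg fun i hi => (hfs i hi).1
    have hP1 : ∏ i ∈ s, f i ≤ 1 := Finset.prod_le_one (fun i hi => (hfs i hi).1)
      (fun i hi => (hfs i hi).2)
    have ha0 := (hf a (Finset.mem_insert_self a s)).1
    have ha1 := (hf a (Finset.mem_insert_self a s)).2
    rw [Finset.sum_insert ha, Finset.prod_insert ha, Finset.card_insert_of_notMem ha]
    have := ih hfs
    push_cast
    nlinarith [mul_nonneg (sub_nonneg.2 ha1) (sub_nonneg.2 hP1)]

theorem mean_minus_prod_bounds (n : ℕ) (hn : 1 ≤ n) (r : Fin n → ℝ)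
    (hr : ∀ i, 0 ≤ r i ∧ r i ≤ 1) :
    0 ≤ (∑ i, r i) / n - ∏ i, r i ∧
      (∑ i, r i) / n - ∏ i, r i ≤ ((n : ℝ) - 1) / n := by
  have hnpos : (0:ℝ) < n := by exact_mod_cast hn
  have hP0 : 0 ≤ ∏ i, r i := Finset.prod_nonneg fun i _ => (hr i).1
  have hP1 : ∏ i, r i ≤ 1 := Finset.prod_le_one (fun i _ => (hr i).1) (fun i _ => (hr i).2)
  constructor
  · have hle : ∀ i : Fin n, ∏ j, r j ≤ r i := by
      intro i
      calc ∏ j, r j = r i * ∏ j ∈ Finset.univ.erase i, r j :=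
            (Finset.mul_prod_erase _ _ (Finset.mem_univ i)).symm
        _ ≤ r i * 1 := by
            refine mul_le_mul_of_nonneg_left ?_ (hr i).1
            exact Finset.prod_le_one (fun j _ => (hr j).1) (fun j _ => (hr j).2)
        _ = r i := mul_one _
    have hsum : ∑ i : Fin n, ∏ j, r j ≤ ∑ i, r i := Finset.sum_le_sum fun i _ => hle i
    simp only [Finset.sum_const, Finset.card_univ, Fintype.card_fin, nsmul_eq_mul] at hsum
    rw [sub_nonneg, le_div_iff₀ hnpos]
    linarith
  · have key : ∑ i, r i ≤ (n : ℝ) - 1 + ∏ i, r i := by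
      have h := sum_le_card_sub_one_add_prod (Finset.range n)
        (fun k => if h : k < n then r ⟨k, h⟩ else 0)
        (by intro i hi; rw [Finset.mem_range] at hi; simpa [hi] using hr ⟨i, hi⟩)
      rw [Finset.card_range] at h
      have hs : ∑ i, r i = ∑ k ∈ Finset.range n,
          (fun k => if h : k < n then r ⟨k, h⟩ else 0) k := by
        rw [Finset.sum_range fun k => _]
        exact Finset.sum_congr rfl fun i _ => by simp [i.isLt]
      have hp : ∏ i, r i = ∏ k ∈ Finset.range n,
          (fun k => if h : k < n then r ⟨k, h⟩ else 0) k := by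
        rw [Finset.prod_range fun k => _]
        exact Finset.prod_congr rfl fun i _ => by simp [i.isLt]
      rw [hs, hp]
      exact h
    rw [div_sub' (ne_of_gt hnpos), div_le_div_iff₀ hnpos hnpos]
    have hn1 : (1:ℝ) ≤ n := by exact_mod_cast hn
    have h1 : ∑ i, r i - n * ∏ i, r i ≤ (n:ℝ) - 1 := by
      nlinarith [mul_nonneg hP0 (sub_nonneg.2 hn1)]
    nlinarith [mul_le_mul_of_nonneg_right h1 (le_of_lt hnpos)]
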